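/- Let T be a left-invertible bounded operator on a Hilbert space with left-inverse L. If 0 ∈ σ(T), then for every nonzero complex λ with λ ∉ σ_l(L), the point 1/λ belongs to σ_r(T) \ σ_l(T); moreover 0 itself belongs to σ_r(T) \ σ_l(T) and 0 ∈ σ_l(L) \ σ_r(L). -/

import Mathlib

open ContinuousLinearMap

/-- The left spectrum of `T`. -/
def leftSpectrum {H : Type*} [NormedAddCommGroup H] [InnerProductSpace ℂ H] [CompleteSpace H]
    (T : H →L[ℂ] H) : Set ℂ :=
  {z | ¬ ∃ L : H →L[ℂ] H, L * (T - z • 1) = 1}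

/-- The right spectrum of `T`. -/
def rightSpectrum {H : Type*} [NormedAddCommGroup H] [InnerProductSpace ℂ H] [CompleteSpace H]
    (T : H →L[ℂ] H) : Set ℂ :=
  {z | ¬ ∃ R : H →L[ℂ] H, (T - z • 1) * R = 1}

/-- Spectral dichotomy: if `LT = I` and `0 ∈ σ(T)`, then for every nonzero `λ ∉ σ_l(L)`,
`1/λ ∈ σ_r(T) \ σ_l(T)`; moreover `0 ∈ σ_r(T) \ σ_l(T)` and `0 ∈ σ_l(L) \ σ_r(L)`. -/
theorem stmt_10 {H : Type*} [NormedAddCommGroup H] [InnerProductSpace ℂ H] [CompleteSpace H]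
    (T L : H →L[ℂ] H) (hL : L * T = 1) (h0 : (0 : ℂ) ∈ spectrum ℂ T) :
    (∀ z : ℂ, z ≠ 0 → z ∉ leftSpectrum L →
      z⁻¹ ∈ rightSpectrum T ∧ z⁻¹ ∉ leftSpectrum T) ∧
    ((0 : ℂ) ∈ rightSpectrum T ∧ (0 : ℂ) ∉ leftSpectrum T) ∧
    ((0 : ℂ) ∈ leftSpectrum L ∧ (0 : ℂ) ∉ rightSpectrum L) := by
  have hTnot : ¬ IsUnit T := by
    intro hT
    rw [spectrum.mem_iff] at h0
    apply h0
    simpa using hT.neg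
  have hTL : ∀ X : H →L[ℂ] H, T * X = 1 → False := by
    intro X hX
    have hXL : X = L := by
      calc X = (L * T) * X := by rw [hL, one_mul]
        _ = L * (T * X) := by rw [mul_assoc]
        _ = L := by rw [hX, mul_one]
    exact hTnot ⟨⟨T, L, hXL ▸ hX, hL⟩, rfl⟩
  refine ⟨?_, ⟨?_, ?_⟩, ?_, ?_⟩
  · intro z hz hzL
    simp only [leftSpectrum, Set.mem_setOf_eq, not_not] at hzL
    obtain ⟨A, hA⟩ := hzL
    have hA' : A * L = 1 + z • A := by
      rw [mul_sub, mul_smul_comm, mul_one] at hA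
      rw [← hA]
      abel
    have h1 : ((-z) • (A * L)) * (T - z⁻¹ • 1) = 1 := by
      rw [smul_mul_assoc, mul_sub, mul_assoc, hL, mul_one, mul_smul_comm, mul_one, hA']
      match_scalars <;> field_simp <;> ring
    have hId : L - z • 1 = (-z) • (L * (T - z⁻¹ • 1)) := by
      rw [mul_sub, hL, mul_smul_comm, mul_one]
      match_scalars <;> field_simp
    constructor
    · simp only [rightSpectrum, Set.mem_setOf_eq]
      rintro ⟨R, hR⟩
      set B := (-z) • (A * L) with hBdef
      have hRB : R = B := by
        calc R = (B * (T - z⁻¹ • 1)) * R := by rw [h1, one_mul]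
          _ = B * ((T - z⁻¹ • 1) * R) := by rw [mul_assoc]
          _ = B := by rw [hR, mul_one]
      have hright : (T - z⁻¹ • 1) * B = 1 := hRB ▸ hR
      have hC : (L - z • 1) * ((-z)⁻¹ • (B * T)) = 1 := by
        rw [hId, smul_mul_assoc, mul_smul_comm, smul_smul, mul_assoc,
          ← mul_assoc (T - z⁻¹ • 1), hright, one_mul, hL,
          mul_inv_cancel₀ (neg_ne_zero.mpr hz), one_smul]
      have hAC : A = (-z)⁻¹ • (B * T) := by
        calc A = A * ((L - z • 1) * ((-z)⁻¹ • (B * T))) := by rw [hC, mul_one]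
          _ = (A * (L - z • 1)) * ((-z)⁻¹ • (B * T)) := by rw [mul_assoc]
          _ = (-z)⁻¹ • (B * T) := by rw [hA, one_mul]
      have hLzUnit : IsUnit (L - z • 1) := ⟨⟨L - z • 1, A, hAC ▸ hC, hA⟩, rfl⟩
      have hTmuUnit : IsUnit (T - z⁻¹ • 1) := ⟨⟨T - z⁻¹ • 1, B, hright, h1⟩, rfl⟩
      have h2 : L * (T - z⁻¹ • 1) = (-z)⁻¹ • (L - z • 1) := by
        rw [hId, smul_smul, inv_mul_cancel₀ (neg_ne_zero.mpr hz), one_smul]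
      have hscal : IsUnit ((-z)⁻¹ • (1 : H →L[ℂ] H)) :=
        ⟨⟨(-z)⁻¹ • 1, (-z) • 1,
          by rw [smul_mul_assoc, one_mul, smul_smul, inv_mul_cancel₀ (neg_ne_zero.mpr hz), one_smul],
          by rw [smul_mul_assoc, one_mul, smul_smul, mul_inv_cancel₀ (neg_ne_zero.mpr hz), one_smul]⟩, rfl⟩
      have hLTunit : IsUnit (L * (T - z⁻¹ • 1)) := by
        rw [h2, show ((-z)⁻¹ • (L - z • 1)) = ((-z)⁻¹ • (1 : H →L[ℂ] H)) * (L - z • 1) by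
          rw [smul_mul_assoc, one_mul]]
        exact hscal.mul hLzUnit
      have hLunit : IsUnit L := by
        have h3 := hLTunit.mul hTmuUnit.unit⁻¹.isUnit
        rwa [mul_assoc, IsUnit.mul_val_inv, mul_one] at h3
      apply hTnot
      have h4 : T = ↑hLunit.unit⁻¹ := by
        calc T = (↑hLunit.unit⁻¹ * L) * T := by rw [IsUnit.val_inv_mul, one_mul]
          _ = ↑hLunit.unit⁻¹ * (L * T) := by rw [mul_assoc]
          _ = ↑hLunit.unit⁻¹ := by rw [hL, mul_one]
      rw [h4]
      exact hLunit.unit⁻¹.isUnit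
    · simp only [leftSpectrum, Set.mem_setOf_eq, not_not]
      exact ⟨_, h1⟩
  · simp only [rightSpectrum, Set.mem_setOf_eq, zero_smul, sub_zero]
    rintro ⟨R, hR⟩
    exact hTL R hR
  · simp only [leftSpectrum, Set.mem_setOf_eq, not_not, zero_smul, sub_zero]
    exact ⟨L, hL⟩
  · simp only [leftSpectrum, Set.mem_setOf_eq, zero_smul, sub_zero]
    rintro ⟨A, hA⟩
    have hAT : A = T := by
      calc A = A * (L * T) := by rw [hL, mul_one]
        _ = (A * L) * T := by rw [mul_assoc]
        _ = T := by rw [hA, one_mul]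
    exact hTL L (hAT ▸ hA)
  · simp only [rightSpectrum, Set.mem_setOf_eq, not_not, zero_smul, sub_zero]
    exact ⟨T, hL⟩
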